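/- For σ = [[4,1],[1,4]] : ℤ² → ℤ², every group homomorphism ι : ℤ[1/5] → lim→(ℤ², σ) has the property that ι(1) is represented at some stage by a vector of the form (c, c) with c ∈ ℤ. -/

import Mathlib

noncomputable section

def zOneDiv (p : ℕ) : AddSubgroup ℚ :=
  AddSubgroup.closure {q : ℚ | ∃ n : ℕ, q = 1 / (p : ℚ) ^ n}

def sigma : Module.End ℤ (Fin 2 → ℤ) := Matrix.toLin' !![4, 1; 1, 4]

def fSys : ∀ i j : ℕ, i ≤ j → (Fin 2 → ℤ) →ₗ[ℤ] (Fin 2 → ℤ) :=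
  fun i j _ => sigma ^ (j - i)

def L : Type := Module.DirectLimit (fun _ : ℕ => Fin 2 → ℤ) fSys

instance : AddCommGroup L := Module.DirectLimit.addCommGroup _ fSys

def ofL (k : ℕ) (v : Fin 2 → ℤ) : L :=
  Module.DirectLimit.of ℤ ℕ (fun _ : ℕ => Fin 2 → ℤ) fSys k v

def one5 : ↥(zOneDiv 5) := ⟨1, AddSubgroup.subset_closure ⟨0, by norm_num⟩⟩

-- auxiliary lemmas

lemma ofL_eq (k : ℕ) (v : Fin 2 → ℤ) :
    ofL k v = Module.DirectLimit.of ℤ ℕ (fun _ : ℕ => Fin 2 → ℤ) fSys k v := rfl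

lemma sigma_apply (v : Fin 2 → ℤ) : sigma v = ![4 * v 0 + v 1, v 0 + 4 * v 1] := by
  funext i
  fin_cases i <;>
    simp [sigma, Matrix.toLin'_apply, Matrix.mulVec, dotProduct,
      Fin.sum_univ_two]

instance dirSys : DirectedSystem (fun _ : ℕ => Fin 2 → ℤ) (fun i j h => fSys i j h) where
  map_self := by intro i x; simp [fSys]
  map_map := by
    intro c b a hab hbc x
    simp only [fSys, ← Module.End.mul_apply, ← pow_add]
    rw [show c - b + (b - a) = c - a from by omega]

lemma sigma_inj : Function.Injective (sigma : (Fin 2 → ℤ) →ₗ[ℤ] (Fin 2 → ℤ)) := by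
  intro x y h
  rw [sigma_apply, sigma_apply] at h
  have h0 := congrFun h 0
  have h1 := congrFun h 1
  simp at h0 h1
  funext i; fin_cases i <;> simp <;> omega

lemma fSys_inj (i j : ℕ) (h : i ≤ j) : Function.Injective (fSys i j h) := by
  show Function.Injective (sigma ^ (j - i))
  induction (j - i) with
  | zero => rw [pow_zero]; exact fun a b h => h
  | succ n ih =>
    rw [pow_succ]
    exact fun a b hab => sigma_inj (ih (by simpa [Module.End.mul_apply] using hab))

def dd (v : Fin 2 → ℤ) : ℤ := v 0 - v 1

lemma dd_sigma (v : Fin 2 → ℤ) : dd (sigma v) = 3 * dd v := by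
  rw [sigma_apply]; simp [dd]; ring

lemma dd_smul (c : ℤ) (v : Fin 2 → ℤ) : dd (c • v) = c * dd v := by
  simp [dd]; ring

lemma dd_pow (n : ℕ) : ∀ v, dd ((sigma ^ n) v) = 3 ^ n * dd v := by
  induction n with
  | zero => intro v; simp
  | succ n ih =>
    intro v
    rw [pow_succ, Module.End.mul_apply, ih, dd_sigma]
    ring

lemma dd_fSys (i j : ℕ) (h : i ≤ j) (v : Fin 2 → ℤ) :
    dd (fSys i j h v) = 3 ^ (j - i) * dd v := dd_pow _ _

theorem stmt2 (ι : ↥(zOneDiv 5) →+ L) :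
    ∃ (k : ℕ) (c : ℤ), ι one5 = ofL k (fun _ => c) := by
  obtain ⟨k, v, hv⟩ := Module.DirectLimit.exists_of
    (ι one5 : Module.DirectLimit (fun _ : ℕ => Fin 2 → ℤ) fSys)
  have key : ∀ n : ℕ, (5 : ℤ) ^ n ∣ dd v := by
    intro n
    set en : ↥(zOneDiv 5) := ⟨1 / (5:ℚ) ^ n, AddSubgroup.subset_closure ⟨n, by norm_num⟩⟩ with hen
    have hsm : ((5:ℤ) ^ n) • en = one5 := by
      apply Subtype.ext
      push_cast [hen, one5]
      rw [zsmul_eq_mul]; push_cast; field_simp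
    obtain ⟨j, w, hw⟩ := Module.DirectLimit.exists_of
      (ι en : Module.DirectLimit (fun _ : ℕ => Fin 2 → ℤ) fSys)
    rw [← ofL_eq] at hv hw
    have heq : ofL k v = ((5:ℤ)^n) • ofL j w := by
      rw [hv, hw, ← map_zsmul, hsm]
    set m := max k j
    have hkm : k ≤ m := le_max_left _ _
    have hjm : j ≤ m := le_max_right _ _
    have heq2 : Module.DirectLimit.of ℤ ℕ (fun _ : ℕ => Fin 2 → ℤ) fSys m
        (fSys k m hkm v - ((5:ℤ)^n) • fSys j m hjm w) = 0 := by
      rw [map_sub, map_smul, ← ofL_eq, ← ofL_eq]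
      rw [show ofL m (fSys k m hkm v) = ofL k v from Module.DirectLimit.of_f,
        show ofL m (fSys j m hjm w) = ofL j w from Module.DirectLimit.of_f, heq]; exact sub_self _
    obtain ⟨p, hmp, hp⟩ := Module.DirectLimit.of.zero_exact heq2
    have hz : fSys k m hkm v - ((5:ℤ)^n) • fSys j m hjm w = 0 := by
      apply fSys_inj m p hmp
      rw [hp, map_zero]
    have hveq : fSys k m hkm v = ((5:ℤ)^n) • fSys j m hjm w := sub_eq_zero.mp hz
    have hdd : (3:ℤ) ^ (m - k) * dd v = (5:ℤ)^n * ((3:ℤ)^(m-j) * dd w) := by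
      have h := congrArg dd hveq
      rw [dd_fSys, dd_smul, dd_fSys] at h
      exact h
    have hcop : IsCoprime ((5:ℤ)^n) ((3:ℤ)^(m-k)) := by
      apply IsCoprime.pow
      norm_num [Int.isCoprime_iff_gcd_eq_one]
    exact hcop.dvd_of_dvd_mul_left ⟨(3:ℤ)^(m-j) * dd w, hdd⟩
  have hdd0 : dd v = 0 := by
    by_contra h
    have hpos : 0 < |dd v| := abs_pos.mpr h
    have hle : (5:ℤ) ^ (dd v).natAbs ≤ |dd v| :=
      Int.le_of_dvd hpos ((dvd_abs _ _).mpr (key _))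
    have hlt : ((dd v).natAbs : ℤ) < (5:ℤ) ^ (dd v).natAbs := by
      exact_mod_cast Nat.lt_pow_self (n := (dd v).natAbs) (by norm_num : 1 < 5)
    rw [Int.abs_eq_natAbs] at hle
    omega
  refine ⟨k, v 0, ?_⟩
  rw [← ofL_eq] at hv
  rw [← hv]
  congr 1
  funext i
  fin_cases i
  · rfl
  · show v 1 = v 0
    have h01 : v 0 - v 1 = 0 := hdd0
    omega

end
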